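/- For k ∈ (0,1), with K, E the complete elliptic integrals and Θ(k) = ∫₀^{π/2} cos²θ/√(1-k²sin²θ) dθ, the mass m(k) = (8/π) k² K(k) Θ(k) satisfies (π/8) m'(k) = (E(k) + (k²-1)K(k))²/(k(1-k²)) + k K(k)²; in particular m'(k) > 0, so m is strictly increasing on (0,1). -/

import Mathlib

open Real MeasureTheory Metric Set

namespace MassAux

lemma A_pos {x : ℝ} (hx : |x| < 1) (t : ℝ) : 0 < 1 - x ^ 2 * Real.sin t ^ 2 := by
  nlinarith [Real.sin_sq_le_one t, sq_abs x, sq_nonneg x, abs_nonneg x, sq_nonneg (Real.sin t)]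

lemma sqrtA_pos {x : ℝ} (hx : |x| < 1) (t : ℝ) :
    0 < Real.sqrt (1 - x ^ 2 * Real.sin t ^ 2) := Real.sqrt_pos.2 (A_pos hx t)

lemma sq_sqrtA {x : ℝ} (hx : |x| < 1) (t : ℝ) :
    Real.sqrt (1 - x ^ 2 * Real.sin t ^ 2) ^ 2 = 1 - x ^ 2 * Real.sin t ^ 2 :=
  Real.sq_sqrt (A_pos hx t).le

lemma contSqrtA (x : ℝ) : Continuous fun t => Real.sqrt (1 - x ^ 2 * Real.sin t ^ 2) :=
  (continuous_const.sub (continuous_const.mul (Real.continuous_sin.pow 2))).sqrt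

lemma hasDerivAt_sqrtA {x t : ℝ} (hx : |x| < 1) :
    HasDerivAt (fun y => Real.sqrt (1 - y ^ 2 * Real.sin t ^ 2))
      (-(x * Real.sin t ^ 2) / Real.sqrt (1 - x ^ 2 * Real.sin t ^ 2)) x := by
  have h1 : HasDerivAt (fun y : ℝ => 1 - y ^ 2 * Real.sin t ^ 2)
      (-(2 * x * Real.sin t ^ 2)) x := by
    simpa using ((hasDerivAt_pow 2 x).mul_const (Real.sin t ^ 2)).const_sub 1
  have h2 := (Real.hasDerivAt_sqrt (A_pos hx t).ne').comp x h1
  refine h2.congr_deriv (Eq.symm ?_)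
  have hs := (sqrtA_pos hx t).ne'
  field_simp

lemma hasDerivAt_invSqrtA {x t : ℝ} (hx : |x| < 1) :
    HasDerivAt (fun y => 1 / Real.sqrt (1 - y ^ 2 * Real.sin t ^ 2))
      (x * Real.sin t ^ 2 / Real.sqrt (1 - x ^ 2 * Real.sin t ^ 2) ^ 3) x := by
  have h2 := hasDerivAt_sqrtA (t := t) hx
  have h3 := (hasDerivAt_const x (1:ℝ)).div h2 (sqrtA_pos hx t).ne'
  refine h3.congr_deriv (Eq.symm ?_)
  have hs := (sqrtA_pos hx t).ne'
  field_simp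
  ring_nf


lemma ball_abs_lt {k x : ℝ} (hk0 : 0 < k) (hk1 : k < 1)
    (hx : x ∈ ball k ((1 - k) / 2)) : |x| < (1 + k) / 2 := by
  rw [mem_ball, Real.dist_eq] at hx
  have := abs_sub_abs_le_abs_sub x k
  rw [abs_of_pos hk0] at this
  linarith

lemma c_lt_one {k : ℝ} (hk1 : k < 1) : (1 + k) / 2 < 1 := by linarith

lemma hasDerivAt_Kint {k : ℝ} (hk0 : 0 < k) (hk1 : k < 1) :
    IntervalIntegrable
      (fun t => k * Real.sin t ^ 2 / Real.sqrt (1 - k ^ 2 * Real.sin t ^ 2) ^ 3)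
      volume 0 (π / 2) ∧
    HasDerivAt (fun x => ∫ t in (0:ℝ)..(π / 2), 1 / Real.sqrt (1 - x ^ 2 * Real.sin t ^ 2))
      (∫ t in (0:ℝ)..(π / 2),
        k * Real.sin t ^ 2 / Real.sqrt (1 - k ^ 2 * Real.sin t ^ 2) ^ 3) k := by
  set c : ℝ := (1 + k) / 2 with hc
  have hc1 : c < 1 := c_lt_one hk1
  have hc0 : 0 < c := by rw [hc]; linarith
  have hck : |k| < c := by rw [abs_of_pos hk0, hc]; linarith
  have hcc : |c| < 1 := by rw [abs_of_pos hc0]; exact hc1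
  have hcont : ∀ x : ℝ, |x| < 1 →
      Continuous fun t => 1 / Real.sqrt (1 - x ^ 2 * Real.sin t ^ 2) := fun x hx =>
    continuous_const.div (contSqrtA x) (fun t => (sqrtA_pos hx t).ne')
  have hcont' : ∀ x : ℝ, |x| < 1 →
      Continuous fun t => x * Real.sin t ^ 2 / Real.sqrt (1 - x ^ 2 * Real.sin t ^ 2) ^ 3 :=
    fun x hx => (continuous_const.mul (Real.continuous_sin.pow 2)).div
      ((contSqrtA x).pow 3) (fun t => pow_ne_zero _ (sqrtA_pos hx t).ne')
  have εpos : (0:ℝ) < (1 - k) / 2 := by linarith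
  have hball : ∀ x ∈ ball k ((1 - k) / 2), |x| < 1 := fun x hx =>
    lt_trans (ball_abs_lt hk0 hk1 hx) hc1
  have hbd : ∀ t : ℝ, ∀ x ∈ ball k ((1 - k) / 2),
      ‖x * Real.sin t ^ 2 / Real.sqrt (1 - x ^ 2 * Real.sin t ^ 2) ^ 3‖ ≤
        c / Real.sqrt (1 - c ^ 2) ^ 3 := by
    intro t x hx
    have hx1 : |x| < 1 := hball x hx
    have hxc : |x| < c := ball_abs_lt hk0 hk1 hx
    have hAc : 0 < 1 - c ^ 2 := by nlinarith
    have hsA : Real.sqrt (1 - c ^ 2) ≤ Real.sqrt (1 - x ^ 2 * Real.sin t ^ 2) := by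
      apply Real.sqrt_le_sqrt
      nlinarith [Real.sin_sq_le_one t, sq_abs x, abs_nonneg x, sq_nonneg (Real.sin t),
        mul_le_mul hxc.le hxc.le (abs_nonneg x) hc0.le]
    have hsc : 0 < Real.sqrt (1 - c ^ 2) := Real.sqrt_pos.2 hAc
    rw [Real.norm_eq_abs, abs_div, abs_of_pos (pow_pos (sqrtA_pos hx1 t) 3)]
    apply div_le_div₀ (by positivity) ?_ (by positivity) (pow_le_pow_left₀ hsc.le hsA 3)
    rw [abs_mul, abs_of_nonneg (sq_nonneg (Real.sin t))]
    calc |x| * Real.sin t ^ 2 ≤ c * 1 :=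
          mul_le_mul hxc.le (Real.sin_sq_le_one t) (sq_nonneg _) hc0.le
      _ = c := mul_one c
  have := intervalIntegral.hasDerivAt_integral_of_dominated_loc_of_deriv_le
    (F := fun x t => 1 / Real.sqrt (1 - x ^ 2 * Real.sin t ^ 2))
    (F' := fun x t => x * Real.sin t ^ 2 / Real.sqrt (1 - x ^ 2 * Real.sin t ^ 2) ^ 3)
    (x₀ := k) (a := 0) (b := π / 2) (μ := volume)
    (bound := fun _ => c / Real.sqrt (1 - c ^ 2) ^ 3) (ball_mem_nhds k εpos)
    (Filter.eventually_of_mem (ball_mem_nhds k εpos)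
      (fun x hx => ((hcont x (hball x hx)).aestronglyMeasurable)))
    ((hcont k (hck.trans hc1)).intervalIntegrable _ _)
    ((hcont' k (hck.trans hc1)).aestronglyMeasurable)
    (Filter.Eventually.of_forall fun t _ x hx => hbd t x hx)
    (intervalIntegrable_const)
    (Filter.Eventually.of_forall fun t _ x hx => hasDerivAt_invSqrtA (hball x hx))
  exact this


lemma hasDerivAt_Eint {k : ℝ} (hk0 : 0 < k) (hk1 : k < 1) :
    IntervalIntegrable
      (fun t => -(k * Real.sin t ^ 2) / Real.sqrt (1 - k ^ 2 * Real.sin t ^ 2))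
      volume 0 (π / 2) ∧
    HasDerivAt (fun x => ∫ t in (0:ℝ)..(π / 2), Real.sqrt (1 - x ^ 2 * Real.sin t ^ 2))
      (∫ t in (0:ℝ)..(π / 2),
        -(k * Real.sin t ^ 2) / Real.sqrt (1 - k ^ 2 * Real.sin t ^ 2)) k := by
  set c : ℝ := (1 + k) / 2 with hc
  have hc1 : c < 1 := c_lt_one hk1
  have hc0 : 0 < c := by rw [hc]; linarith
  have hck : |k| < c := by rw [abs_of_pos hk0, hc]; linarith
  have hk1' : |k| < 1 := hck.trans hc1
  have hcont' : ∀ x : ℝ, |x| < 1 →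
      Continuous fun t => -(x * Real.sin t ^ 2) / Real.sqrt (1 - x ^ 2 * Real.sin t ^ 2) :=
    fun x hx => ((continuous_const.mul (Real.continuous_sin.pow 2)).neg).div
      (contSqrtA x) (fun t => (sqrtA_pos hx t).ne')
  have εpos : (0:ℝ) < (1 - k) / 2 := by linarith
  have hball : ∀ x ∈ ball k ((1 - k) / 2), |x| < 1 := fun x hx =>
    lt_trans (ball_abs_lt hk0 hk1 hx) hc1
  have hbd : ∀ t : ℝ, ∀ x ∈ ball k ((1 - k) / 2),
      ‖-(x * Real.sin t ^ 2) / Real.sqrt (1 - x ^ 2 * Real.sin t ^ 2)‖ ≤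
        c / Real.sqrt (1 - c ^ 2) := by
    intro t x hx
    have hx1 : |x| < 1 := hball x hx
    have hxc : |x| < c := ball_abs_lt hk0 hk1 hx
    have hAc : 0 < 1 - c ^ 2 := by nlinarith
    have hsA : Real.sqrt (1 - c ^ 2) ≤ Real.sqrt (1 - x ^ 2 * Real.sin t ^ 2) := by
      apply Real.sqrt_le_sqrt
      nlinarith [Real.sin_sq_le_one t, sq_abs x, abs_nonneg x, sq_nonneg (Real.sin t),
        mul_le_mul hxc.le hxc.le (abs_nonneg x) hc0.le]
    have hsc : 0 < Real.sqrt (1 - c ^ 2) := Real.sqrt_pos.2 hAc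
    rw [Real.norm_eq_abs, abs_div, abs_of_pos (sqrtA_pos hx1 t), abs_neg]
    apply div_le_div₀ (by positivity) ?_ (by positivity) hsA
    rw [abs_mul, abs_of_nonneg (sq_nonneg (Real.sin t))]
    calc |x| * Real.sin t ^ 2 ≤ c * 1 :=
          mul_le_mul hxc.le (Real.sin_sq_le_one t) (sq_nonneg _) hc0.le
      _ = c := mul_one c
  exact intervalIntegral.hasDerivAt_integral_of_dominated_loc_of_deriv_le
    (F := fun x t => Real.sqrt (1 - x ^ 2 * Real.sin t ^ 2))
    (F' := fun x t => -(x * Real.sin t ^ 2) / Real.sqrt (1 - x ^ 2 * Real.sin t ^ 2))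
    (x₀ := k) (a := 0) (b := π / 2) (μ := volume)
    (bound := fun _ => c / Real.sqrt (1 - c ^ 2)) (ball_mem_nhds k εpos)
    (Filter.eventually_of_mem (ball_mem_nhds k εpos)
      (fun x _ => (contSqrtA x).aestronglyMeasurable))
    ((contSqrtA k).intervalIntegrable _ _)
    ((hcont' k hk1').aestronglyMeasurable)
    (Filter.Eventually.of_forall fun t _ x hx => hbd t x hx)
    (intervalIntegrable_const)
    (Filter.Eventually.of_forall fun t _ x hx => by
      have := hasDerivAt_sqrtA (x := x) (t := t) (hball x hx)
      simpa using this)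


lemma hasDerivAt_g {k : ℝ} (hk : |k| < 1) (t : ℝ) :
    HasDerivAt (fun t => -k ^ 2 * (Real.sin t * Real.cos t) /
        Real.sqrt (1 - k ^ 2 * Real.sin t ^ 2))
      ((1 - k ^ 2) / Real.sqrt (1 - k ^ 2 * Real.sin t ^ 2) ^ 3 -
        Real.sqrt (1 - k ^ 2 * Real.sin t ^ 2)) t := by
  have hu : HasDerivAt (fun t => -k ^ 2 * (Real.sin t * Real.cos t))
      (-k ^ 2 * (Real.cos t * Real.cos t + Real.sin t * (-Real.sin t))) t :=
    ((Real.hasDerivAt_sin t).mul (Real.hasDerivAt_cos t)).const_mul _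
  have hA' : HasDerivAt (fun t => 1 - k ^ 2 * Real.sin t ^ 2)
      (-(k ^ 2 * (2 * Real.sin t ^ 1 * Real.cos t))) t := by
    have := ((Real.hasDerivAt_sin t).pow 2).const_mul (k ^ 2)
    have h2 := this.const_sub 1
    have h3 : 1 - k ^ 2 * ((2:ℕ) * Real.sin t ^ (2 - 1) * Real.cos t) =
        -(k ^ 2 * (2 * Real.sin t ^ 1 * Real.cos t)) + 1 := by push_cast; ring
    simpa [h3] using h2
  have hv := (Real.hasDerivAt_sqrt (A_pos hk t).ne').comp t hA'
  have hg := hu.div hv (sqrtA_pos hk t).ne'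
  refine hg.congr_deriv (Eq.symm ?_)
  have hr0 := (sqrtA_pos hk t).ne'
  have hr2 := sq_sqrtA hk t
  have hpy := Real.sin_sq_add_cos_sq t
  simp only [Function.comp_apply]
  field_simp
  linear_combination ((k ^ 2 * (Real.cos t ^ 2 - Real.sin t ^ 2) -
        (Real.sqrt (1 - k ^ 2 * Real.sin t ^ 2) ^ 2 + (1 - k ^ 2 * Real.sin t ^ 2)))) * hr2 +
    (k ^ 2) * hpy


lemma J_eq {k : ℝ} (hk0 : 0 < k) (hk1 : k < 1) :
    (1 - k ^ 2) * (∫ t in (0:ℝ)..(π / 2),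
        1 / Real.sqrt (1 - k ^ 2 * Real.sin t ^ 2) ^ 3) =
      ∫ t in (0:ℝ)..(π / 2), Real.sqrt (1 - k ^ 2 * Real.sin t ^ 2) := by
  have hk : |k| < 1 := by rw [abs_of_pos hk0]; exact hk1
  have hJc : Continuous fun t => 1 / Real.sqrt (1 - k ^ 2 * Real.sin t ^ 2) ^ 3 :=
    continuous_const.div ((contSqrtA k).pow 3) (fun t => pow_ne_zero _ (sqrtA_pos hk t).ne')
  have hintJ : IntervalIntegrable (fun t => 1 / Real.sqrt (1 - k ^ 2 * Real.sin t ^ 2) ^ 3)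
      volume 0 (π / 2) := hJc.intervalIntegrable _ _
  have hintE : IntervalIntegrable (fun t => Real.sqrt (1 - k ^ 2 * Real.sin t ^ 2))
      volume 0 (π / 2) := (contSqrtA k).intervalIntegrable _ _
  have hftc : (∫ t in (0:ℝ)..(π / 2),
      ((1 - k ^ 2) / Real.sqrt (1 - k ^ 2 * Real.sin t ^ 2) ^ 3 -
        Real.sqrt (1 - k ^ 2 * Real.sin t ^ 2))) = 0 := by
    rw [intervalIntegral.integral_eq_sub_of_hasDerivAt
      (fun t _ => hasDerivAt_g hk t)
      (((continuous_const.div ((contSqrtA k).pow 3)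
          (fun t => pow_ne_zero _ (sqrtA_pos hk t).ne')).sub
        (contSqrtA k)).intervalIntegrable _ _)]
    simp [Real.cos_pi_div_two]
  have hsplit : (∫ t in (0:ℝ)..(π / 2),
      ((1 - k ^ 2) / Real.sqrt (1 - k ^ 2 * Real.sin t ^ 2) ^ 3 -
        Real.sqrt (1 - k ^ 2 * Real.sin t ^ 2))) =
      (1 - k ^ 2) * (∫ t in (0:ℝ)..(π / 2),
        1 / Real.sqrt (1 - k ^ 2 * Real.sin t ^ 2) ^ 3) -
      ∫ t in (0:ℝ)..(π / 2), Real.sqrt (1 - k ^ 2 * Real.sin t ^ 2) := by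
    have hfe : (fun t => (1 - k ^ 2) / Real.sqrt (1 - k ^ 2 * Real.sin t ^ 2) ^ 3 -
        Real.sqrt (1 - k ^ 2 * Real.sin t ^ 2)) =
        fun t => (1 - k ^ 2) * (1 / Real.sqrt (1 - k ^ 2 * Real.sin t ^ 2) ^ 3) -
          Real.sqrt (1 - k ^ 2 * Real.sin t ^ 2) := by
      funext t; rw [mul_one_div]
    rw [hfe, intervalIntegral.integral_sub (hintJ.const_mul _) hintE,
      intervalIntegral.integral_const_mul]
  linarith [hsplit ▸ hftc]


lemma contInvSqrtA {x : ℝ} (hx : |x| < 1) :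
    Continuous fun t => 1 / Real.sqrt (1 - x ^ 2 * Real.sin t ^ 2) :=
  continuous_const.div (contSqrtA x) (fun t => (sqrtA_pos hx t).ne')

lemma contInvCube {x : ℝ} (hx : |x| < 1) :
    Continuous fun t => 1 / Real.sqrt (1 - x ^ 2 * Real.sin t ^ 2) ^ 3 :=
  continuous_const.div ((contSqrtA x).pow 3) (fun t => pow_ne_zero _ (sqrtA_pos hx t).ne')

lemma DK_eq {k : ℝ} (hk0 : 0 < k) (hk1 : k < 1) :
    (∫ t in (0:ℝ)..(π / 2), k * Real.sin t ^ 2 / Real.sqrt (1 - k ^ 2 * Real.sin t ^ 2) ^ 3) =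
      (1 / k) * ((∫ t in (0:ℝ)..(π / 2), 1 / Real.sqrt (1 - k ^ 2 * Real.sin t ^ 2) ^ 3) -
        ∫ t in (0:ℝ)..(π / 2), 1 / Real.sqrt (1 - k ^ 2 * Real.sin t ^ 2)) := by
  have hk : |k| < 1 := by rw [abs_of_pos hk0]; exact hk1
  rw [← intervalIntegral.integral_sub ((contInvCube hk).intervalIntegrable _ _)
      ((contInvSqrtA hk).intervalIntegrable _ _),
    ← intervalIntegral.integral_const_mul]
  apply intervalIntegral.integral_congr
  intro t _
  have hr0 := (sqrtA_pos hk t).ne'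
  have hr2 := sq_sqrtA hk t
  have hkne := hk0.ne'
  field_simp
  linear_combination hr2

lemma DE_eq {k : ℝ} (hk0 : 0 < k) (hk1 : k < 1) :
    (∫ t in (0:ℝ)..(π / 2), -(k * Real.sin t ^ 2) / Real.sqrt (1 - k ^ 2 * Real.sin t ^ 2)) =
      (1 / k) * ((∫ t in (0:ℝ)..(π / 2), Real.sqrt (1 - k ^ 2 * Real.sin t ^ 2)) -
        ∫ t in (0:ℝ)..(π / 2), 1 / Real.sqrt (1 - k ^ 2 * Real.sin t ^ 2)) := by
  have hk : |k| < 1 := by rw [abs_of_pos hk0]; exact hk1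
  rw [← intervalIntegral.integral_sub ((contSqrtA k).intervalIntegrable _ _)
      ((contInvSqrtA hk).intervalIntegrable _ _),
    ← intervalIntegral.integral_const_mul]
  apply intervalIntegral.integral_congr
  intro t _
  have hr0 := (sqrtA_pos hk t).ne'
  have hr2 := sq_sqrtA hk t
  have hkne := hk0.ne'
  field_simp
  linear_combination (-1 : ℝ) * hr2

lemma Theta_eq {x : ℝ} (hx : |x| < 1) :
    x ^ 2 * (∫ t in (0:ℝ)..(π / 2),
        Real.cos t ^ 2 / Real.sqrt (1 - x ^ 2 * Real.sin t ^ 2)) =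
      (∫ t in (0:ℝ)..(π / 2), Real.sqrt (1 - x ^ 2 * Real.sin t ^ 2)) +
        (x ^ 2 - 1) * (∫ t in (0:ℝ)..(π / 2),
          1 / Real.sqrt (1 - x ^ 2 * Real.sin t ^ 2)) := by
  rw [← intervalIntegral.integral_const_mul, ← intervalIntegral.integral_const_mul,
    ← intervalIntegral.integral_add ((contSqrtA x).intervalIntegrable _ _)
      (((contInvSqrtA hx).intervalIntegrable _ _).const_mul _)]
  apply intervalIntegral.integral_congr
  intro t _
  have hr0 := (sqrtA_pos hx t).ne'
  have hr2 := sq_sqrtA hx t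
  have hpy := Real.sin_sq_add_cos_sq t
  field_simp
  linear_combination (-1 : ℝ) * hr2 + x ^ 2 * hpy

end MassAux

open Real

/-- Derivative of the mass function `m(k) = (8/π) k² K(k) Θ(k)`:
`(π/8) m'(k) = (E + (k²-1)K)²/(k(1-k²)) + k K²`; in particular `m' > 0` and `m`
is strictly increasing on `(0,1)`. -/
theorem mass_derivative_formula
    (K E Θ m : ℝ → ℝ)
    (hK : ∀ k, K k = ∫ θ in (0:ℝ)..(Real.pi / 2),
      1 / Real.sqrt (1 - k ^ 2 * Real.sin θ ^ 2))
    (hE : ∀ k, E k = ∫ θ in (0:ℝ)..(Real.pi / 2),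
      Real.sqrt (1 - k ^ 2 * Real.sin θ ^ 2))
    (hΘ : ∀ k, Θ k = ∫ θ in (0:ℝ)..(Real.pi / 2),
      Real.cos θ ^ 2 / Real.sqrt (1 - k ^ 2 * Real.sin θ ^ 2))
    (hm : ∀ k, m k = (8 / Real.pi) * k ^ 2 * K k * Θ k) :
    (∀ k ∈ Set.Ioo (0:ℝ) 1,
      HasDerivAt m ((8 / Real.pi) *
        ((E k + (k ^ 2 - 1) * K k) ^ 2 / (k * (1 - k ^ 2)) + k * (K k) ^ 2)) k ∧
      0 < (8 / Real.pi) *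
        ((E k + (k ^ 2 - 1) * K k) ^ 2 / (k * (1 - k ^ 2)) + k * (K k) ^ 2)) ∧
    StrictMonoOn m (Set.Ioo 0 1) := by
  have main : ∀ k ∈ Set.Ioo (0:ℝ) 1,
      HasDerivAt m ((8 / Real.pi) *
        ((E k + (k ^ 2 - 1) * K k) ^ 2 / (k * (1 - k ^ 2)) + k * (K k) ^ 2)) k ∧
      0 < (8 / Real.pi) *
        ((E k + (k ^ 2 - 1) * K k) ^ 2 / (k * (1 - k ^ 2)) + k * (K k) ^ 2) := by
    rintro k ⟨hk0, hk1⟩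
    have hk : |k| < 1 := by rw [abs_of_pos hk0]; exact hk1
    have hkne : k ≠ 0 := hk0.ne'
    have h1k : (1:ℝ) - k ^ 2 ≠ 0 := by nlinarith
    have hKfun : K = fun x => ∫ θ in (0:ℝ)..(Real.pi / 2),
        1 / Real.sqrt (1 - x ^ 2 * Real.sin θ ^ 2) := funext hK
    have hEfun : E = fun x => ∫ θ in (0:ℝ)..(Real.pi / 2),
        Real.sqrt (1 - x ^ 2 * Real.sin θ ^ 2) := funext hE
    obtain ⟨hJint, hKd⟩ := MassAux.hasDerivAt_Kint hk0 hk1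
    obtain ⟨_, hEd⟩ := MassAux.hasDerivAt_Eint hk0 hk1
    have hJeq := MassAux.J_eq hk0 hk1
    rw [MassAux.DK_eq hk0 hk1] at hKd
    rw [MassAux.DE_eq hk0 hk1] at hEd
    -- derivative of K with the value in terms of E, K
    rw [← hKfun] at hKd
    rw [← hEfun] at hEd
    have hK' : HasDerivAt K ((E k + (k ^ 2 - 1) * K k) / (k * (1 - k ^ 2))) k := by
      refine hKd.congr_deriv (Eq.symm ?_)
      rw [hE k, hK k]
      field_simp
      linear_combination (-1 : ℝ) * hJeq
    have hE' : HasDerivAt E ((E k - K k) / k) k := by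
      convert hEd using 1
      rw [hE k, hK k]
      ring
    have hL' : HasDerivAt (fun x => E x + (x ^ 2 - 1) * K x) (k * K k) k := by
      have h := hE'.add (((hasDerivAt_pow 2 k).sub_const 1).mul hK')
      refine h.congr_deriv (Eq.symm ?_)
      push_cast
      field_simp
      ring
    have hMd : HasDerivAt (fun x => 8 / Real.pi * (K x * (E x + (x ^ 2 - 1) * K x)))
        ((8 / Real.pi) * (((E k + (k ^ 2 - 1) * K k) / (k * (1 - k ^ 2))) *
          (E k + (k ^ 2 - 1) * K k) + K k * (k * K k))) k := (hK'.mul hL').const_mul _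
    have hEq : m =ᶠ[nhds k] fun x => 8 / Real.pi * (K x * (E x + (x ^ 2 - 1) * K x)) := by
      filter_upwards [Ioo_mem_nhds (show (-1:ℝ) < k by linarith) hk1] with x hx
      have hx1 : |x| < 1 := abs_lt.2 ⟨hx.1, hx.2⟩
      have hth := MassAux.Theta_eq hx1
      rw [hm x, hΘ x, hK x, hE x, ← hth]
      ring
    have hM : HasDerivAt m ((8 / Real.pi) *
        ((E k + (k ^ 2 - 1) * K k) ^ 2 / (k * (1 - k ^ 2)) + k * (K k) ^ 2)) k := by
      have := hMd.congr_of_eventuallyEq hEq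
      refine this.congr_deriv (Eq.symm ?_)
      ring
    have hKpos : 0 < K k := by
      rw [hK k]
      exact intervalIntegral.intervalIntegral_pos_of_pos ((MassAux.contInvSqrtA hk).intervalIntegrable _ _)
        (fun t => one_div_pos.2 (MassAux.sqrtA_pos hk t)) (by positivity)
    refine ⟨hM, ?_⟩
    have h8 : 0 < 8 / Real.pi := by positivity
    have h1 : 0 ≤ (E k + (k ^ 2 - 1) * K k) ^ 2 / (k * (1 - k ^ 2)) :=
      div_nonneg (sq_nonneg _) (by nlinarith)
    have h2 : 0 < k * (K k) ^ 2 := by positivity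
    exact mul_pos h8 (by linarith)
  refine ⟨main, ?_⟩
  have hcont : ContinuousOn m (Set.Ioo 0 1) := fun x hx =>
    ((main x hx).1).continuousAt.continuousWithinAt
  apply strictMonoOn_of_deriv_pos (convex_Ioo 0 1) hcont
  intro x hx
  rw [interior_Ioo] at hx
  rw [(main x hx).1.deriv]
  exact (main x hx).2
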